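/- Let G^σ be a connected oriented graph of order n ≥ 5. Then sr(G^σ) = 2 if and only if the underlying graph of G^σ is a complete bipartite or complete tripartite graph and every 4-vertex cycle in G^σ is evenly-oriented. -/

import Mathlib

open Matrix Submodule Module

set_option linter.unusedSectionVars false
set_option linter.unusedVariables false
set_option maxHeartbeats 2000000

namespace SkewAux

variable {V : Type} [Fintype V] [DecidableEq V]

lemma skw {S : Matrix V V ℝ} (h : Sᵀ = -S) (i j : V) : S j i = -S i j := by
  have := congrFun (congrFun h j) i
  simp only [Matrix.transpose_apply, Matrix.neg_apply] at this
  linarith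

lemma diag {S : Matrix V V ℝ} (h : Sᵀ = -S) (i : V) : S i i = 0 := by
  have := skw h i i; linarith

lemma pm {S : Matrix V V ℝ} (hent : ∀ i j : V, S i j = 0 ∨ S i j = 1 ∨ S i j = -1)
    {i j : V} (h : S i j ≠ 0) : S i j = 1 ∨ S i j = -1 := by
  rcases hent i j with h0 | h1 | h1
  · exact absurd h0 h
  · exact Or.inl h1
  · exact Or.inr h1

lemma col_mem_range (S : Matrix V V ℝ) (j : V) :
    (fun i => S i j) ∈ LinearMap.range S.mulVecLin := by
  refine ⟨Pi.single j 1, ?_⟩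
  simp [Matrix.mulVecLin_apply]
  rfl

/-- Any three columns of a rank ≤ 2 matrix are dependent. -/
lemma dep3 {S : Matrix V V ℝ} (h2 : S.rank ≤ 2) (a b c : V) :
    ∃ α β γ : ℝ, (α ≠ 0 ∨ β ≠ 0 ∨ γ ≠ 0) ∧
      ∀ i, α * S i a + β * S i b + γ * S i c = 0 := by
  set v : Fin 3 → (V → ℝ) := ![fun i => S i a, fun i => S i b, fun i => S i c] with hv
  have hmem : ∀ k : Fin 3, v k ∈ LinearMap.range S.mulVecLin := by
    intro k; fin_cases k <;> exact col_mem_range S _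
  have hnli : ¬ LinearIndependent ℝ v := by
    intro hli
    have h3 : finrank ℝ (span ℝ (Set.range v)) = 3 := by
      simpa using finrank_span_eq_card hli
    have hle : span ℝ (Set.range v) ≤ LinearMap.range S.mulVecLin := by
      rw [Submodule.span_le]; rintro _ ⟨k, rfl⟩; exact hmem k
    have := Submodule.finrank_mono hle
    rw [h3] at this
    have : (3 : ℕ) ≤ S.rank := this
    omega
  obtain ⟨g, hg, k, hk⟩ := Fintype.not_linearIndependent_iff.mp hnli
  refine ⟨g 0, g 1, g 2, ?_, ?_⟩
  · fin_cases k
    · exact Or.inl hk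
    · exact Or.inr (Or.inl hk)
    · exact Or.inr (Or.inr hk)
  · intro i
    have := congrFun hg i
    simpa [hv, Fin.sum_univ_three, mul_comm] using this

/-- transitivity of non-adjacency -/
lemma trans_zero {S : Matrix V V ℝ} (hsk : Sᵀ = -S)
    (dep3 : ∀ a b c : V, ∃ α β γ : ℝ, (α ≠ 0 ∨ β ≠ 0 ∨ γ ≠ 0) ∧
      ∀ i, α * S i a + β * S i b + γ * S i c = 0)
    (hnz : ∀ j : V, ∃ i, S i j ≠ 0)
    {i j k : V} (hij : S i j = 0) (hjk : S j k = 0) : S i k = 0 := by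
  by_contra hik
  obtain ⟨α, β, γ, hne, hsum⟩ := dep3 i j k
  have hi := hsum i
  rw [diag hsk, hij] at hi
  have hγ : γ = 0 := by
    rcases mul_eq_zero.mp (by linarith : γ * S i k = 0) with h | h
    · exact h
    · exact absurd h hik
  have hk := hsum k
  rw [diag hsk, skw hsk i k, skw hsk j k, hjk] at hk
  have hα : α = 0 := by
    rcases mul_eq_zero.mp (by rw [hγ] at hk; linarith : α * (-S i k) = 0) with h | h
    · exact h
    · exact absurd (by linarith : S i k = 0) hik
  have hβ : β = 0 := by
    obtain ⟨r, hr⟩ := hnz j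
    have := hsum r
    rw [hα, hγ] at this
    rcases mul_eq_zero.mp (by linarith : β * S r j = 0) with h | h
    · exact h
    · exact absurd h hr
  rcases hne with h | h | h <;> [exact h hα; exact h hβ; exact h hγ]

/-- no K4 -/
lemma no_K4 {S : Matrix V V ℝ} (hsk : Sᵀ = -S)
    (hent : ∀ i j : V, S i j = 0 ∨ S i j = 1 ∨ S i j = -1)
    (dep3 : ∀ a b c : V, ∃ α β γ : ℝ, (α ≠ 0 ∨ β ≠ 0 ∨ γ ≠ 0) ∧
      ∀ i, α * S i a + β * S i b + γ * S i c = 0)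
    {a b c d : V} (hab : S a b ≠ 0) (hac : S a c ≠ 0) (hbc : S b c ≠ 0)
    (hda : S d a ≠ 0) (hdb : S d b ≠ 0) (hdc : S d c ≠ 0) : False := by
  obtain ⟨α, β, γ, hne, hsum⟩ := dep3 a b c
  have ha := hsum a; have hb := hsum b; have hc := hsum c; have hd := hsum d
  rw [diag hsk, skw hsk a b] at hb
  rw [diag hsk, skw hsk a c, skw hsk b c] at hc
  rw [diag hsk] at ha
  have h0 : α = 0 ∧ β = 0 ∧ γ = 0 := by
    rcases pm hent hab with e1 | e1 <;> rcases pm hent hac with e2 | e2 <;>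
    rcases pm hent hbc with e3 | e3 <;> rcases pm hent hda with e4 | e4 <;>
    rcases pm hent hdb with e5 | e5 <;> rcases pm hent hdc with e6 | e6 <;>
    simp only [e1, e2, e3] at ha hb hc <;> simp only [e4, e5, e6] at hd <;>
    exact ⟨by linarith, by linarith, by linarith⟩
  rcases hne with h | h | h <;> [exact h h0.1; exact h h0.2.1; exact h h0.2.2]

/-- a 4-cycle with missing diagonal a-c is evenly oriented -/
lemma cycle_pos {S : Matrix V V ℝ} (hsk : Sᵀ = -S)
    (dep3 : ∀ a b c : V, ∃ α β γ : ℝ, (α ≠ 0 ∨ β ≠ 0 ∨ γ ≠ 0) ∧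
      ∀ i, α * S i a + β * S i b + γ * S i c = 0)
    {a b c d : V} (hab : S a b ≠ 0) (hbc : S b c ≠ 0) (hcd : S c d ≠ 0)
    (hda : S d a ≠ 0) (hac : S a c = 0) :
    0 < S a b * S b c * S c d * S d a := by
  obtain ⟨α, β, γ, hne, hsum⟩ := dep3 a b c
  have ha := hsum a; have hb := hsum b; have hd := hsum d
  rw [diag hsk, hac] at ha
  have hβ : β = 0 := by
    rcases mul_eq_zero.mp (by linarith : β * S a b = 0) with h | h
    · exact h
    · exact absurd h hab
  rw [diag hsk, hβ] at hb
  rw [hβ] at hd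
  have hα : α ≠ 0 := by
    rintro rfl
    have hγ : γ = 0 := by
      rcases mul_eq_zero.mp (by linarith : γ * S b c = 0) with h | h
      · exact h
      · exact absurd h hbc
    rcases hne with h | h | h <;> simp_all
  have hγ : γ ≠ 0 := by
    rintro rfl
    have h1 : α * S b a = 0 := by linarith
    rcases mul_eq_zero.mp h1 with h | h
    · exact hα h
    · rw [skw hsk a b] at h; exact hab (by linarith)
  have e1 : α * S b a = -(γ * S b c) := by linarith
  have e2 : α * S d a = -(γ * S d c) := by linarith
  have e3 : (α * α) * (S b a * S d a) = (γ * γ) * (S b c * S d c) := by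
    calc (α * α) * (S b a * S d a) = (α * S b a) * (α * S d a) := by ring
    _ = (-(γ * S b c)) * (-(γ * S d c)) := by rw [e1, e2]
    _ = (γ * γ) * (S b c * S d c) := by ring
  have hXY : 0 < (S b a * S d a) * (S b c * S d c) := by
    have hdc : S d c ≠ 0 := by
      rw [skw hsk c d]; simpa using hcd
    have h4 : 0 < (γ * γ) * ((S b c * S d c) * (S b c * S d c)) :=
      mul_pos (mul_self_pos.mpr hγ) (mul_self_pos.mpr (mul_ne_zero hbc hdc))
    have h5 : (α * α) * ((S b a * S d a) * (S b c * S d c)) =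
        (γ * γ) * ((S b c * S d c) * (S b c * S d c)) := by
      calc (α * α) * ((S b a * S d a) * (S b c * S d c))
          = ((α * α) * (S b a * S d a)) * (S b c * S d c) := by ring
        _ = ((γ * γ) * (S b c * S d c)) * (S b c * S d c) := by rw [e3]
        _ = (γ * γ) * ((S b c * S d c) * (S b c * S d c)) := by ring
    nlinarith [mul_self_pos.mpr hα]
  have hfin : S a b * S b c * S c d * S d a = (S b a * S d a) * (S b c * S d c) := by
    rw [skw hsk b a, skw hsk d c]
    ring
  rw [hfin]; exact hXY

end SkewAux

/-- S is the skew-adjacency matrix of some oriented graph: it is skew-symmetric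
with entries in {0, 1, -1}. -/
def IsSkewAdjacency {V : Type} [Fintype V] [DecidableEq V] (S : Matrix V V ℝ) : Prop :=
  S.transpose = -S ∧ ∀ i j : V, S i j = 0 ∨ S i j = 1 ∨ S i j = -1

/-- S is the skew-adjacency matrix of an orientation of the simple graph G. -/
def IsSkewAdjacencyOf {V : Type} [Fintype V] [DecidableEq V]
    (S : Matrix V V ℝ) (G : SimpleGraph V) : Prop :=
  IsSkewAdjacency S ∧ ∀ i j : V, S i j ≠ 0 ↔ G.Adj i j

/-- A connected oriented graph on at least 5 vertices has skew-rank 2 iff its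
underlying graph is complete bipartite or complete tripartite and every
4-vertex cycle is evenly-oriented. -/
theorem skewRank_eq_two_iff
    {V : Type} [Fintype V] [DecidableEq V] (hcard : 5 ≤ Fintype.card V)
    (G : SimpleGraph V) (hconn : G.Connected)
    (S : Matrix V V ℝ) (hS : IsSkewAdjacencyOf S G) :
    S.rank = 2 ↔
      ((∃ p : V → Fin 2, ∀ u v : V, G.Adj u v ↔ p u ≠ p v) ∨
       (∃ p : V → Fin 3, ∀ u v : V, G.Adj u v ↔ p u ≠ p v)) ∧
      (∀ a b c d : V, G.Adj a b → G.Adj b c → G.Adj c d → G.Adj d a →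
        a ≠ c → b ≠ d → 0 < S a b * S b c * S c d * S d a) := by
  classical
  obtain ⟨⟨hsk, hent⟩, hadj⟩ := hS
  have hskw := SkewAux.skw hsk
  have hdg := SkewAux.diag hsk
  have hnontriv : Nontrivial V := Fintype.one_lt_card_iff_nontrivial.mp (by omega)
  have hnbr : ∀ v : V, ∃ w, G.Adj v w := by
    intro v
    obtain ⟨u, hu⟩ := exists_ne v
    obtain ⟨pw⟩ := hconn.preconnected v u
    cases pw with
    | nil => exact absurd rfl (Ne.symm hu)
    | cons h _ => exact ⟨_, h⟩
  have hnz : ∀ j : V, ∃ i, S i j ≠ 0 := by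
    intro j
    obtain ⟨w, hw⟩ := hnbr j
    refine ⟨w, ?_⟩
    rw [hskw j w]
    simpa using (hadj j w).mpr hw
  obtain ⟨z₀, z₁, -⟩ := exists_pair_ne V
  obtain ⟨y₀, hxy⟩ := hnbr z₀
  set x₀ := z₀ with hx₀def
  have sxy : S x₀ y₀ ≠ 0 := (hadj _ _).mpr hxy
  have syx : S y₀ x₀ ≠ 0 := by rw [hskw x₀ y₀]; simpa using sxy
  constructor
  · -- forward direction
    intro h2
    have h2' : S.rank ≤ 2 := le_of_eq h2
    have hdep := fun a b c => SkewAux.dep3 (S := S) h2' a b c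
    have hzero : ∀ u v : V, ¬ G.Adj u v → S u v = 0 := by
      intro u v h
      by_contra hc
      exact h ((hadj u v).mp hc)
    have htrans : ∀ i j k : V, S i j = 0 → S j k = 0 → S i k = 0 :=
      fun i j k => SkewAux.trans_zero hsk hdep hnz
    have hdiff : ∀ u v w : V, ¬G.Adj u w → G.Adj v w → G.Adj u v := by
      intro u v w h1 h2w
      by_contra hA
      have e1 : S v u = 0 := hzero v u (fun h => hA h.symm)
      have e2 : S u w = 0 := hzero u w h1
      exact (hadj v w).mpr h2w (htrans v u w e1 e2)
    have hsame1 : ∀ u v w : V, ¬G.Adj u w → ¬G.Adj v w → ¬G.Adj u v := by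
      intro u v w h1 h2w hA
      have e1 : S u w = 0 := hzero u w h1
      have e2 : S w v = 0 := hzero w v (fun h => h2w h.symm)
      exact (hadj u v).mpr hA (htrans u w v e1 e2)
    have hsame2 : ∀ u v : V, G.Adj u x₀ → G.Adj u y₀ → G.Adj v x₀ → G.Adj v y₀ →
        ¬G.Adj u v := by
      intro u v h1 h2v h3 h4 hA
      refine SkewAux.no_K4 hsk hent hdep (a := u) (b := v) (c := x₀) (d := y₀)
        ((hadj _ _).mpr hA) ((hadj _ _).mpr h1) ((hadj _ _).mpr h3) ?_ ?_ ?_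
      · rw [hskw u y₀]; simpa using (hadj _ _).mpr h2v
      · rw [hskw v y₀]; simpa using (hadj _ _).mpr h4
      · exact syx
    constructor
    · -- complete multipartite structure
      right
      refine ⟨fun v => if G.Adj v x₀ then (if G.Adj v y₀ then 2 else 1) else 0, ?_⟩
      intro u v
      by_cases h1 : G.Adj u x₀ <;> by_cases h3 : G.Adj v x₀
      · by_cases h2v : G.Adj u y₀ <;> by_cases h4 : G.Adj v y₀
        · simp only [if_pos h1, if_pos h3, if_pos h2v, if_pos h4]
          exact iff_of_false (hsame2 u v h1 h2v h3 h4) (by decide)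
        · simp only [if_pos h1, if_pos h3, if_pos h2v, if_neg h4]
          exact iff_of_true ((hdiff v u y₀ h4 h2v).symm) (by decide)
        · simp only [if_pos h1, if_pos h3, if_neg h2v, if_pos h4]
          exact iff_of_true (hdiff u v y₀ h2v h4) (by decide)
        · simp only [if_pos h1, if_pos h3, if_neg h2v, if_neg h4]
          exact iff_of_false (hsame1 u v y₀ h2v h4) (by decide)
      · simp only [if_pos h1, if_neg h3]
        refine iff_of_true ((hdiff v u x₀ h3 h1).symm) ?_
        by_cases h2v : G.Adj u y₀ <;> simp [if_pos, if_neg, h2v] <;> decide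
      · simp only [if_neg h1, if_pos h3]
        refine iff_of_true (hdiff u v x₀ h1 h3) ?_
        by_cases h4 : G.Adj v y₀ <;> simp [if_pos, if_neg, h4] <;> decide
      · simp only [if_neg h1, if_neg h3]
        exact iff_of_false (hsame1 u v x₀ h1 h3) (by decide)
    · -- evenly oriented 4-cycles
      intro a b c d hab hbc hcd hda hac hbd
      have sab : S a b ≠ 0 := (hadj _ _).mpr hab
      have sbc : S b c ≠ 0 := (hadj _ _).mpr hbc
      have scd : S c d ≠ 0 := (hadj _ _).mpr hcd
      have sda : S d a ≠ 0 := (hadj _ _).mpr hda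
      by_cases h1 : S a c = 0
      · exact SkewAux.cycle_pos hsk hdep sab sbc scd sda h1
      · by_cases hbd0 : S b d = 0
        · have h := SkewAux.cycle_pos hsk hdep sbc scd sda sab hbd0
          have heq : S b c * S c d * S d a * S a b = S a b * S b c * S c d * S d a := by
            ring
          linarith
        · exfalso
          have sdb : S d b ≠ 0 := by rw [hskw b d]; simpa using hbd0
          have sdc : S d c ≠ 0 := by rw [hskw c d]; simpa using scd
          exact SkewAux.no_K4 hsk hent hdep sab h1 sbc sda sdb sdc
  · -- backward direction
    rintro ⟨hp, hcyc⟩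
    have hp3 : ∃ p : V → Fin 3, ∀ u v : V, G.Adj u v ↔ p u ≠ p v := by
      rcases hp with ⟨p, h⟩ | h
      · refine ⟨fun v => (p v).castSucc, fun u v => (h u v).trans ?_⟩
        constructor
        · intro hne heq
          exact hne (Fin.castSucc_injective 2 heq)
        · intro hne heq
          exact hne (congrArg Fin.castSucc heq)
      · exact h
    obtain ⟨p, hpiff⟩ := hp3
    have hzero : ∀ u v : V, p u = p v → S u v = 0 := by
      intro u v h
      by_contra hc
      exact (hpiff u v).mp ((hadj u v).mp hc) h
    have hpm : ∀ u v : V, p u ≠ p v → (S u v = 1 ∨ S u v = -1) :=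
      fun u v h => SkewAux.pm hent ((hadj u v).mpr ((hpiff u v).mpr h))
    have hxyp : p x₀ ≠ p y₀ := (hpiff _ _).mp hxy
    have key : ∀ a b c d : V, p a ≠ p b → p b ≠ p c → p c ≠ p d → p d ≠ p a →
        a ≠ c → b ≠ d → S a b * S b c * S c d * S d a = 1 := by
      intro a b c d h1 h2 h3 h4 h5 h6
      have hpos := hcyc a b c d ((hpiff _ _).mpr h1) ((hpiff _ _).mpr h2)
        ((hpiff _ _).mpr h3) ((hpiff _ _).mpr h4) h5 h6
      rcases hpm a b h1 with e1 | e1 <;> rcases hpm b c h2 with e2 | e2 <;>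
        rcases hpm c d h3 with e3 | e3 <;> rcases hpm d a h4 with e4 | e4 <;>
        rw [e1, e2, e3, e4] at hpos ⊢ <;> norm_num at hpos <;> norm_num
    have hcol : ∀ u : V, ∃ s t : ℝ, ∀ i, S i u = s * S i x₀ + t * S i y₀ := by
      intro u
      by_cases hux : p u = p x₀
      · refine ⟨S x₀ y₀ * S u y₀, 0, ?_⟩
        intro i
        by_cases hiu : p i = p u
        · rw [hzero i u hiu, hzero i x₀ (by rw [hiu, hux])]
          ring
        · by_cases hiy : i = y₀
          · rw [hiy, hskw u y₀, hskw x₀ y₀]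
            rcases hpm x₀ y₀ hxyp with a1 | a1 <;>
              rcases hpm u y₀ (by rw [hux]; exact hxyp) with a2 | a2 <;>
              norm_num [a1, a2]
          · by_cases hux0 : u = x₀
            · rw [hux0]
              rcases hpm x₀ y₀ hxyp with a1 | a1 <;> norm_num [a1]
            · have hix : p i ≠ p x₀ := by rw [← hux]; exact hiu
              have hP := key u i x₀ y₀ (Ne.symm hiu) hix hxyp
                (by rw [hux]; exact Ne.symm hxyp) hux0 hiy
              rw [hskw u i, hskw y₀ u]
              rcases hpm u i (Ne.symm hiu) with b1 | b1 <;>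
                rcases hpm i x₀ hix with b2 | b2 <;>
                rcases hpm x₀ y₀ hxyp with b3 | b3 <;>
                rcases hpm y₀ u (by rw [hux]; exact hxyp.symm) with b4 | b4 <;>
                norm_num [b1, b2, b3, b4] at hP <;> norm_num [b1, b2, b3, b4]
      · by_cases huy : p u = p y₀
        · refine ⟨0, S y₀ x₀ * S u x₀, ?_⟩
          intro i
          by_cases hiu : p i = p u
          · rw [hzero i u hiu, hzero i y₀ (by rw [hiu, huy])]
            ring
          · by_cases hix : i = x₀
            · rw [hix, hskw u x₀, hskw x₀ y₀]
              rcases hpm x₀ y₀ hxyp with a1 | a1 <;>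
                rcases hpm u x₀ (by rw [huy]; exact hxyp.symm) with a2 | a2 <;>
                norm_num [a1, a2]
            · by_cases huy0 : u = y₀
              · rw [huy0]
                rcases hpm y₀ x₀ (Ne.symm hxyp) with a1 | a1 <;> norm_num [a1]
              · have hiy : p i ≠ p y₀ := by rw [← huy]; exact hiu
                have hP := key u i y₀ x₀ (Ne.symm hiu) hiy (Ne.symm hxyp)
                  (by rw [huy]; exact hxyp) huy0 hix
                rw [hskw u i, hskw x₀ u]
                rcases hpm u i (Ne.symm hiu) with b1 | b1 <;>
                  rcases hpm i y₀ hiy with b2 | b2 <;>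
                  rcases hpm y₀ x₀ (Ne.symm hxyp) with b3 | b3 <;>
                  rcases hpm x₀ u (by rw [huy]; exact hxyp) with b4 | b4 <;>
                  norm_num [b1, b2, b3, b4] at hP <;> norm_num [b1, b2, b3, b4]
        · refine ⟨S u y₀ * S x₀ y₀, S u x₀ * S y₀ x₀, ?_⟩
          intro i
          have trich : p i = p u ∨ p i = p x₀ ∨ p i = p y₀ := by
            have h3 : ∀ a b c d : Fin 3, a ≠ b → a ≠ c → b ≠ c →
                (d = a ∨ d = b ∨ d = c) := by decide
            exact h3 (p u) (p x₀) (p y₀) (p i) hux huy hxyp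
          rcases trich with hiu | hix | hiy
          · by_cases hieq : i = u
            · rw [hieq, hdg u, hskw x₀ y₀]
              ring
            · have hP := key x₀ i y₀ u (by rw [hiu]; exact Ne.symm hux)
                (by rw [hiu]; exact huy) (Ne.symm huy) hux
                (fun h => hxyp (by rw [h])) hieq
              rw [hzero i u hiu, hskw x₀ i, hskw y₀ u, hskw x₀ y₀]
              rcases hpm x₀ i (by rw [hiu]; exact Ne.symm hux) with b1 | b1 <;>
                rcases hpm i y₀ (by rw [hiu]; exact huy) with b2 | b2 <;>
                rcases hpm y₀ u (Ne.symm huy) with b3 | b3 <;>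
                rcases hpm u x₀ hux with b4 | b4 <;>
                rcases hpm x₀ y₀ hxyp with b5 | b5 <;>
                norm_num [b1, b2, b3, b4, b5] at hP <;> norm_num [b1, b2, b3, b4, b5]
          · by_cases hieq : i = x₀
            · rw [hieq, hdg x₀, hskw u x₀, hskw x₀ y₀]
              rcases hpm u x₀ hux with a1 | a1 <;>
                rcases hpm x₀ y₀ hxyp with a2 | a2 <;>
                norm_num [a1, a2]
            · have hP := key u i y₀ x₀ (by rw [hix]; exact hux)
                (by rw [hix]; exact hxyp) (Ne.symm hxyp) (Ne.symm hux)
                (fun h => huy (by rw [h])) hieq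
              rw [hzero i x₀ hix, hskw u i, hskw x₀ u]
              rcases hpm u i (by rw [hix]; exact hux) with b1 | b1 <;>
                rcases hpm i y₀ (by rw [hix]; exact hxyp) with b2 | b2 <;>
                rcases hpm y₀ x₀ (Ne.symm hxyp) with b3 | b3 <;>
                rcases hpm x₀ u (Ne.symm hux) with b4 | b4 <;>
                norm_num [b1, b2, b3, b4] at hP <;> norm_num [b1, b2, b3, b4]
          · by_cases hieq : i = y₀
            · rw [hieq, hdg y₀, hskw u y₀, hskw x₀ y₀]
              rcases hpm u y₀ huy with a1 | a1 <;>
                rcases hpm x₀ y₀ hxyp with a2 | a2 <;>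
                norm_num [a1, a2]
            · have hP := key u i x₀ y₀ (by rw [hiy]; exact huy)
                (by rw [hiy]; exact Ne.symm hxyp) hxyp (Ne.symm huy)
                (fun h => hux (by rw [h])) hieq
              rw [hzero i y₀ hiy, hskw u i, hskw y₀ u]
              rcases hpm u i (by rw [hiy]; exact huy) with b1 | b1 <;>
                rcases hpm i x₀ (by rw [hiy]; exact Ne.symm hxyp) with b2 | b2 <;>
                rcases hpm x₀ y₀ hxyp with b3 | b3 <;>
                rcases hpm y₀ u (Ne.symm huy) with b4 | b4 <;>
                norm_num [b1, b2, b3, b4] at hP <;> norm_num [b1, b2, b3, b4]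
    -- now compute the rank
    set c1 : V → ℝ := fun i => S i x₀ with hc1
    set c2 : V → ℝ := fun i => S i y₀ with hc2
    have hli : LinearIndependent ℝ ![c1, c2] := by
      rw [LinearIndependent.pair_iff]
      intro s t hst
      have h1 := congrFun hst y₀
      have h2 := congrFun hst x₀
      simp only [hc1, hc2, Pi.add_apply, Pi.smul_apply, smul_eq_mul, Pi.zero_apply,
        hdg] at h1 h2
      constructor
      · rcases mul_eq_zero.mp (by linarith : s * S y₀ x₀ = 0) with h | h
        · exact h
        · exact absurd h syx
      · rcases mul_eq_zero.mp (by linarith : t * S x₀ y₀ = 0) with h | h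
        · exact h
        · exact absurd h sxy
    have hspan : LinearMap.range S.mulVecLin = span ℝ {c1, c2} := by
      rw [Matrix.range_mulVecLin]
      apply le_antisymm
      · rw [Submodule.span_le]
        rintro _ ⟨u, rfl⟩
        obtain ⟨s, t, hst⟩ := hcol u
        rw [SetLike.mem_coe, Submodule.mem_span_pair]
        refine ⟨s, t, ?_⟩
        funext i
        simpa [hc1, hc2] using (hst i).symm
      · rw [Submodule.span_le]
        intro x hx
        simp only [Set.mem_insert_iff, Set.mem_singleton_iff] at hx
        rcases hx with rfl | rfl
        · exact Submodule.subset_span ⟨x₀, funext fun i => rfl⟩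
        · exact Submodule.subset_span ⟨y₀, funext fun i => rfl⟩
    have hrank : S.rank = finrank ℝ (span ℝ ({c1, c2} : Set (V → ℝ))) := by
      rw [show S.rank = finrank ℝ (LinearMap.range S.mulVecLin) from rfl, hspan]
    have hsets : ({c1, c2} : Set (V → ℝ)) = Set.range ![c1, c2] := by
      ext z
      simp only [Set.mem_insert_iff, Set.mem_singleton_iff, Set.mem_range,
        Fin.exists_fin_two, Matrix.cons_val_zero, Matrix.cons_val_one, Matrix.head_cons]
      tauto
    rw [hrank, hsets, finrank_span_eq_card hli]
    simp
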